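/- arXiv:1005.3142 — 8 statements merged into one kernel-verified Lean document; each statement's English description precedes it below -/
import Mathlib

section
/- Let (X,≤) be a partially ordered set with a metric d making (X,d) a complete metric space. Let F: X×X → X be continuous and have the mixed monotone property. Suppose there exist α, β > 0 with α + β < 1 such that d(F(x,y),F(u,v)) ≤ α·M((x,y),(u,v)) + (β/2)[d(x,u)+d(y,v)] for all (x,y),(u,v) ∈ X×X with x ≥ u and y ≤ v, where M((x,y),(u,v)) = min{ d(x,F(x,y))·(2+d(u,F(u,v))+d(v,F(v,u)))/(2+d(x,u)+d(y,v)), d(u,F(u,v))·(2+d(x,F(x,y))+d(y,F(y,x)))/(2+d(x,u)+d(y,v)) }. If there exist x₀, y₀ ∈ X with x₀ ≤ F(x₀,y₀) and y₀ ≥ F(y₀,x₀), then F has a coupled fixed point: there exists (x,y) ∈ X×X with F(x,y) = x and F(y,x) = y. -/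
open Filter Topology

/-- Mixed monotone property: `x ↦ F x y` nondecreasing, `y ↦ F x y` nonincreasing. -/
def MixedMonotone {X : Type*} [PartialOrder X] (F : X → X → X) : Prop :=
  (∀ y, Monotone fun x => F x y) ∧ (∀ x, Antitone fun y => F x y)

/-- The rational expression `M((x,y),(u,v))` from the paper. -/
noncomputable def Mexpr {X : Type*} [MetricSpace X] (F : X → X → X) (x y u v : X) : ℝ :=
  min (dist x (F x y) * (2 + dist u (F u v) + dist v (F v u)) / (2 + dist x u + dist y v))
      (dist u (F u v) * (2 + dist x (F x y) + dist y (F y x)) / (2 + dist x u + dist y v))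

theorem coupled_fixed_point_exists
    {X : Type*} [MetricSpace X] [PartialOrder X] [CompleteSpace X]
    (F : X → X → X) (hFc : Continuous fun p : X × X => F p.1 p.2)
    (hmm : MixedMonotone F) (α β : ℝ) (hα : 0 < α) (hβ : 0 < β) (hαβ : α + β < 1)
    (hcontr : ∀ x y u v : X, u ≤ x → y ≤ v →
      dist (F x y) (F u v) ≤ α * Mexpr F x y u v + β / 2 * (dist x u + dist y v))
    (x₀ y₀ : X) (hx₀ : x₀ ≤ F x₀ y₀) (hy₀ : F y₀ x₀ ≤ y₀) :
    ∃ x y : X, F x y = x ∧ F y x = y := by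
  obtain ⟨hmono, hanti⟩ := hmm
  set g : X × X → X × X := fun q => (F q.1 q.2, F q.2 q.1) with hg
  set xs : ℕ → X := fun n => (g^[n] (x₀, y₀)).1 with hxs
  set ys : ℕ → X := fun n => (g^[n] (x₀, y₀)).2 with hys
  have hstepx : ∀ n, xs (n + 1) = F (xs n) (ys n) := by
    intro n; simp [hxs, hys, hg, Function.iterate_succ_apply']
  have hstepy : ∀ n, ys (n + 1) = F (ys n) (xs n) := by
    intro n; simp [hxs, hys, hg, Function.iterate_succ_apply']
  -- monotonicity of the sequences
  have hmonoseq : ∀ n, xs n ≤ xs (n + 1) ∧ ys (n + 1) ≤ ys n := by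
    intro n
    induction n with
    | zero => exact ⟨by rw [hstepx]; exact hx₀, by rw [hstepy]; exact hy₀⟩
    | succ n ih =>
      refine ⟨?_, ?_⟩
      · rw [hstepx n, hstepx (n + 1)]
        exact le_trans (hmono (ys n) ih.1) (hanti (xs (n + 1)) ih.2)
      · rw [hstepy n, hstepy (n + 1)]
        exact le_trans (hmono (xs (n + 1)) ih.2) (hanti (ys n) ih.1)
  set D : ℕ → ℝ := fun n => dist (xs n) (xs (n + 1)) + dist (ys n) (ys (n + 1)) with hD
  have h1α : 0 < 1 - α := by linarith
  set k : ℝ := β / (1 - α) with hk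
  have hk0 : 0 ≤ k := by positivity
  have hk1 : k < 1 := by rw [hk, div_lt_one h1α]; linarith
  have hDpos : ∀ n, 0 ≤ D n := fun n => add_nonneg dist_nonneg dist_nonneg
  -- contraction of D
  have hcontrD : ∀ n, D (n + 1) ≤ k * D n := by
    intro n
    have hxle := (hmonoseq n).1
    have hyle := (hmonoseq n).2
    have hq : (0:ℝ) < 2 + dist (xs (n+1)) (xs n) + dist (ys (n+1)) (ys n) := by positivity
    have hq' : (0:ℝ) < 2 + dist (ys n) (ys (n+1)) + dist (xs n) (xs (n+1)) := by positivity
    -- bound for x-part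
    have hMx : Mexpr F (xs (n+1)) (ys (n+1)) (xs n) (ys n) ≤ dist (xs (n+1)) (xs (n+2)) := by
      refine le_trans (min_le_left _ _) ?_
      rw [← hstepx n, ← hstepy n, ← hstepx (n+1)]
      rw [dist_comm (xs (n+1)) (xs n), dist_comm (ys (n+1)) (ys n)]
      rw [mul_div_assoc, div_self (ne_of_gt (by positivity)), mul_one]
    have hx2 : dist (xs (n+1)) (xs (n+2)) ≤
        α * dist (xs (n+1)) (xs (n+2)) + β / 2 * (dist (xs n) (xs (n+1)) + dist (ys n) (ys (n+1))) := by
      have h := hcontr (xs (n+1)) (ys (n+1)) (xs n) (ys n) hxle hyle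
      rw [← hstepx (n+1), ← hstepx n, dist_comm (xs (n+2)) (xs (n+1)),
        dist_comm (xs (n+1)) (xs n), dist_comm (ys (n+1)) (ys n)] at h
      have := mul_le_mul_of_nonneg_left hMx (le_of_lt hα)
      linarith
    -- bound for y-part
    have hMy : Mexpr F (ys n) (xs n) (ys (n+1)) (xs (n+1)) ≤ dist (ys (n+1)) (ys (n+2)) := by
      refine le_trans (min_le_right _ _) ?_
      rw [← hstepy (n+1), ← hstepy n, ← hstepx n]
      rw [mul_div_assoc, div_self (ne_of_gt (by positivity)), mul_one]
    have hy2 : dist (ys (n+1)) (ys (n+2)) ≤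
        α * dist (ys (n+1)) (ys (n+2)) + β / 2 * (dist (xs n) (xs (n+1)) + dist (ys n) (ys (n+1))) := by
      have h := hcontr (ys n) (xs n) (ys (n+1)) (xs (n+1)) hyle hxle
      rw [← hstepy n, ← hstepy (n+1)] at h
      have := mul_le_mul_of_nonneg_left hMy (le_of_lt hα)
      linarith [dist_comm (ys (n+2)) (ys (n+1)), dist_comm (ys (n+1)) (ys n),
        dist_comm (xs (n+1)) (xs n)]
    have hDn1 : (1 - α) * D (n+1) ≤ β * D n := by
      simp only [hD]; nlinarith [hx2, hy2]
    rw [hk, div_mul_eq_mul_div, le_div_iff₀ h1α]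
    nlinarith [hDn1]
  -- geometric bound
  have hgeom : ∀ n, D n ≤ D 0 * k ^ n := by
    intro n
    induction n with
    | zero => simp
    | succ n ih =>
      calc D (n+1) ≤ k * D n := hcontrD n
        _ ≤ k * (D 0 * k ^ n) := mul_le_mul_of_nonneg_left ih hk0
        _ = D 0 * k ^ (n+1) := by ring
  -- Cauchy sequences
  have hcx : CauchySeq xs := by
    refine cauchySeq_of_le_geometric k (D 0) hk1 fun n => ?_
    calc dist (xs n) (xs (n+1)) ≤ D n := le_add_of_nonneg_right dist_nonneg
      _ ≤ D 0 * k ^ n := hgeom n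
  have hcy : CauchySeq ys := by
    refine cauchySeq_of_le_geometric k (D 0) hk1 fun n => ?_
    calc dist (ys n) (ys (n+1)) ≤ D n := le_add_of_nonneg_left dist_nonneg
      _ ≤ D 0 * k ^ n := hgeom n
  obtain ⟨a, ha⟩ := cauchySeq_tendsto_of_complete hcx
  obtain ⟨b, hb⟩ := cauchySeq_tendsto_of_complete hcy
  refine ⟨a, b, ?_, ?_⟩
  · have h1 : Tendsto (fun n => F (xs n) (ys n)) atTop (𝓝 (F a b)) :=
      (hFc.tendsto (a, b)).comp (ha.prodMk_nhds hb)
    have h2 : Tendsto (fun n => xs (n + 1)) atTop (𝓝 a) :=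
      ha.comp (tendsto_add_atTop_nat 1)
    simp only [hstepx] at h2
    exact (tendsto_nhds_unique h2 h1).symm
  · have hFc2 : Continuous fun p : X × X => F p.2 p.1 := hFc.comp continuous_swap
    have h1 : Tendsto (fun n => F (ys n) (xs n)) atTop (𝓝 (F b a)) :=
      (hFc2.tendsto (a, b)).comp (ha.prodMk_nhds hb)
    have h2 : Tendsto (fun n => ys (n + 1)) atTop (𝓝 b) :=
      hb.comp (tendsto_add_atTop_nat 1)
    simp only [hstepy] at h2
    exact (tendsto_nhds_unique h2 h1).symm
end

section
/- Let (X,≤) be a partially ordered set with a metric d making (X,d) a complete metric space. Assume: (i) if a nondecreasing sequence {xₙ} converges to x, then xₙ ≤ x for all n; (ii) if a nonincreasing sequence {yₙ} converges to y, then yₙ ≥ y for all n. Let F: X×X → X have the mixed monotone property (no continuity assumed). Suppose there exist α, β > 0 with α + β < 1 such that d(F(x,y),F(u,v)) ≤ α·M((x,y),(u,v)) + (β/2)[d(x,u)+d(y,v)] for all x ≥ u, y ≤ v, where M is as defined. If there exist x₀, y₀ with x₀ ≤ F(x₀,y₀) and y₀ ≥ F(y₀,x₀), then F has a coupled fixed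 point. -/
open Filter Topology

theorem coupled_fixed_point_exists_of_order_limits
    {X : Type*} [MetricSpace X] [PartialOrder X] [CompleteSpace X]
    (hup : ∀ (s : ℕ → X) (x : X), Monotone s → Tendsto s atTop (𝓝 x) → ∀ n, s n ≤ x)
    (hdown : ∀ (s : ℕ → X) (y : X), Antitone s → Tendsto s atTop (𝓝 y) → ∀ n, y ≤ s n)
    (F : X → X → X)
    (hmm : MixedMonotone F) (α β : ℝ) (hα : 0 < α) (hβ : 0 < β) (hαβ : α + β < 1)
    (hcontr : ∀ x y u v : X, u ≤ x → y ≤ v →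
      dist (F x y) (F u v) ≤ α * Mexpr F x y u v + β / 2 * (dist x u + dist y v))
    (x₀ y₀ : X) (hx₀ : x₀ ≤ F x₀ y₀) (hy₀ : F y₀ x₀ ≤ y₀) :
    ∃ x y : X, F x y = x ∧ F y x = y := by
  obtain ⟨hmono, hanti⟩ := hmm
  have h1α : 0 < 1 - α := by linarith
  set k : ℝ := β / (1 - α) with hk
  have hk0 : 0 < k := div_pos hβ h1α
  have hk1 : k < 1 := (div_lt_one h1α).2 (by linarith)
  -- the Picard sequences
  let p : ℕ → X × X := fun n =>
    Nat.rec (motive := fun _ => X × X) (x₀, y₀) (fun _ q => (F q.1 q.2, F q.2 q.1)) n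
  let a : ℕ → X := fun n => (p n).1
  let b : ℕ → X := fun n => (p n).2
  have hFa : ∀ n, F (a n) (b n) = a (n + 1) := fun n => rfl
  have hFb : ∀ n, F (b n) (a n) = b (n + 1) := fun n => rfl
  have hstep : ∀ n, a n ≤ a (n + 1) ∧ b (n + 1) ≤ b n := by
    intro n
    induction n with
    | zero => exact ⟨hx₀, hy₀⟩
    | succ n ih =>
      refine ⟨?_, ?_⟩
      · rw [← hFa n, ← hFa (n + 1)]
        exact le_trans (hmono (b n) ih.1) (hanti (a (n + 1)) ih.2)
      · rw [← hFb n, ← hFb (n + 1)]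
        exact le_trans (hmono (a (n + 1)) ih.2) (hanti (b n) ih.1)
  have hamono : Monotone a := monotone_nat_of_le_succ fun n => (hstep n).1
  have hbanti : Antitone b := antitone_nat_of_succ_le fun n => (hstep n).2
  set D : ℕ → ℝ := fun n => dist (a (n + 1)) (a n) + dist (b (n + 1)) (b n) with hD
  have hDnonneg : ∀ n, 0 ≤ D n := fun n => by positivity
  -- key contraction on D
  have hDstep : ∀ n, D (n + 1) ≤ k * D n := by
    intro n
    have hpos : (0:ℝ) < 2 + dist (a (n + 1)) (a n) + dist (b (n + 1)) (b n) := by positivity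
    -- bound on Mexpr for the a-part
    have hM1 : Mexpr F (a (n + 1)) (b (n + 1)) (a n) (b n) ≤ dist (a (n + 2)) (a (n + 1)) := by
      have e : dist (a (n + 1)) (F (a (n + 1)) (b (n + 1))) *
          (2 + dist (a n) (F (a n) (b n)) + dist (b n) (F (b n) (a n))) /
          (2 + dist (a (n + 1)) (a n) + dist (b (n + 1)) (b n))
          = dist (a (n + 2)) (a (n + 1)) := by
        rw [hFa (n + 1), hFa n, hFb n, dist_comm (a n) (a (n + 1)),
          dist_comm (b n) (b (n + 1)), dist_comm (a (n + 1)) (a (n + 2)),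
          mul_div_assoc, div_self (ne_of_gt hpos), mul_one]
      exact le_of_le_of_eq (min_le_left _ _) e
    have hM2 : Mexpr F (b n) (a n) (b (n + 1)) (a (n + 1)) ≤ dist (b (n + 2)) (b (n + 1)) := by
      have hpos2 : (0:ℝ) < 2 + dist (b n) (b (n + 1)) + dist (a n) (a (n + 1)) := by positivity
      have e : dist (b (n + 1)) (F (b (n + 1)) (a (n + 1))) *
          (2 + dist (b n) (F (b n) (a n)) + dist (a n) (F (a n) (b n))) /
          (2 + dist (b n) (b (n + 1)) + dist (a n) (a (n + 1)))
          = dist (b (n + 2)) (b (n + 1)) := by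
        rw [hFb (n + 1), hFb n, hFa n, dist_comm (b (n + 1)) (b (n + 2)),
          mul_div_assoc, div_self (ne_of_gt hpos2), mul_one]
      exact le_of_le_of_eq (min_le_right _ _) e
    have h1 := hcontr (a (n + 1)) (b (n + 1)) (a n) (b n) (hstep n).1 (hstep n).2
    rw [hFa (n + 1), hFa n] at h1
    rw [show n + 1 + 1 = n + 2 from rfl] at h1
    have h2 := hcontr (b n) (a n) (b (n + 1)) (a (n + 1)) (hstep n).2 (hstep n).1
    rw [hFb n, hFb (n + 1), dist_comm (b (n + 1)) (b (n + 2))] at h2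
    have hM1' := mul_le_mul_of_nonneg_left hM1 hα.le
    have hM2' := mul_le_mul_of_nonneg_left hM2 hα.le
    rw [dist_comm (b n) (b (n + 1)), dist_comm (a n) (a (n + 1))] at h2
    have hA : dist (a (n + 2)) (a (n + 1)) ≤ α * dist (a (n + 2)) (a (n + 1)) +
        β / 2 * (dist (a (n + 1)) (a n) + dist (b (n + 1)) (b n)) := by linarith
    have hB : dist (b (n + 2)) (b (n + 1)) ≤ α * dist (b (n + 2)) (b (n + 1)) +
        β / 2 * (dist (a (n + 1)) (a n) + dist (b (n + 1)) (b n)) := by linarith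
    show dist (a (n + 2)) (a (n + 1)) + dist (b (n + 2)) (b (n + 1)) ≤
      k * (dist (a (n + 1)) (a n) + dist (b (n + 1)) (b n))
    rw [hk, div_mul_eq_mul_div, le_div_iff₀ h1α]
    have hd1 : (0:ℝ) ≤ dist (a (n + 1)) (a n) := dist_nonneg
    have hd2 : (0:ℝ) ≤ dist (b (n + 1)) (b n) := dist_nonneg
    nlinarith
  have hDgeom : ∀ n, D n ≤ D 0 * k ^ n := by
    intro n
    induction n with
    | zero => simp
    | succ n ih =>
      calc D (n + 1) ≤ k * D n := hDstep n
        _ ≤ k * (D 0 * k ^ n) := mul_le_mul_of_nonneg_left ih hk0.le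
        _ = D 0 * k ^ (n + 1) := by ring
  have hadist : ∀ n, dist (a n) (a (n + 1)) ≤ D 0 * k ^ n := fun n =>
    le_trans (by rw [dist_comm]; have := dist_nonneg (x := b (n + 1)) (y := b n); simp only [hD]; linarith)
      (hDgeom n)
  have hbdist : ∀ n, dist (b n) (b (n + 1)) ≤ D 0 * k ^ n := fun n =>
    le_trans (by rw [dist_comm]; have := dist_nonneg (x := a (n + 1)) (y := a n); simp only [hD]; linarith)
      (hDgeom n)
  have hCa : CauchySeq a := cauchySeq_of_le_geometric k (D 0) hk1 hadist
  have hCb : CauchySeq b := cauchySeq_of_le_geometric k (D 0) hk1 hbdist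
  obtain ⟨x, hx⟩ := cauchySeq_tendsto_of_complete hCa
  obtain ⟨y, hy⟩ := cauchySeq_tendsto_of_complete hCb
  have hax : ∀ n, a n ≤ x := hup a x hamono hx
  have hyb : ∀ n, y ≤ b n := hdown b y hbanti hy
  -- limits of distances
  have tgeom : Tendsto (fun n => D 0 * k ^ n) atTop (𝓝 0) := by
    simpa using (tendsto_pow_atTop_nhds_zero_of_lt_one hk0.le hk1).const_mul (D 0)
  have t3a : Tendsto (fun n => dist (a n) (a (n + 1))) atTop (𝓝 0) :=
    squeeze_zero (fun n => dist_nonneg) hadist tgeom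
  have t3b : Tendsto (fun n => dist (b n) (b (n + 1))) atTop (𝓝 0) :=
    squeeze_zero (fun n => dist_nonneg) hbdist tgeom
  have t1 : Tendsto (fun n => dist x (a n)) atTop (𝓝 0) := by
    simpa using (tendsto_const_nhds (x := x)).dist hx
  have t2 : Tendsto (fun n => dist y (b n)) atTop (𝓝 0) := by
    simpa using (tendsto_const_nhds (x := y)).dist hy
  have t1' : Tendsto (fun n => dist x (a (n + 1))) atTop (𝓝 0) :=
    t1.comp (tendsto_add_atTop_nat 1)
  have t2' : Tendsto (fun n => dist y (b (n + 1))) atTop (𝓝 0) :=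
    t2.comp (tendsto_add_atTop_nat 1)
  set C : ℝ := 2 + dist x (F x y) + dist y (F y x) with hC
  have hC0 : 0 ≤ C := by positivity
  -- the fixed point equations
  have hfx : F x y = x := by
    have key : ∀ n, dist x (F x y) ≤ dist x (a (n + 1)) +
        (α * (dist (a n) (a (n + 1)) * C / 2) + β / 2 * (dist x (a n) + dist y (b n))) := by
      intro n
      have h := hcontr x y (a n) (b n) (hax n) (hyb n)
      rw [hFa n] at h
      have hM : Mexpr F x y (a n) (b n) ≤ dist (a n) (a (n + 1)) * C / 2 := by
        have hpos : (0:ℝ) < 2 + dist x (a n) + dist y (b n) := by positivity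
        have step1 : Mexpr F x y (a n) (b n) ≤
            dist (a n) (F (a n) (b n)) * (2 + dist x (F x y) + dist y (F y x)) /
            (2 + dist x (a n) + dist y (b n)) := min_le_right _ _
        rw [hFa n] at step1
        refine le_trans step1 ?_
        rw [← hC]
        gcongr
        linarith [dist_nonneg (x := x) (y := a n), dist_nonneg (x := y) (y := b n)]
      have hd : dist x (F x y) ≤ dist x (a (n + 1)) + dist (F x y) (a (n + 1)) := by
        rw [dist_comm (F x y) (a (n + 1))]
        exact dist_triangle _ _ _
      have hM' := mul_le_mul_of_nonneg_left hM hα.le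
      linarith
    have tg : Tendsto (fun n => dist x (a (n + 1)) +
        (α * (dist (a n) (a (n + 1)) * C / 2) + β / 2 * (dist x (a n) + dist y (b n))))
        atTop (𝓝 0) := by
      have := t1'.add ((((t3a.mul_const C).div_const 2).const_mul α).add
        ((t1.add t2).const_mul (β / 2)))
      simpa using this
    have : dist x (F x y) ≤ 0 := ge_of_tendsto tg (Eventually.of_forall key)
    have := le_antisymm this dist_nonneg
    rw [dist_comm] at this
    exact dist_eq_zero.1 this
  have hfy : F y x = y := by
    have key : ∀ n, dist y (F y x) ≤ dist y (b (n + 1)) +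
        (α * (dist (b n) (b (n + 1)) * C / 2) + β / 2 * (dist y (b n) + dist x (a n))) := by
      intro n
      have h := hcontr (b n) (a n) y x (hyb n) (hax n)
      rw [hFb n] at h
      have hM : Mexpr F (b n) (a n) y x ≤ dist (b n) (b (n + 1)) * C / 2 := by
        have hpos : (0:ℝ) < 2 + dist (b n) y + dist (a n) x := by positivity
        have step1 : Mexpr F (b n) (a n) y x ≤
            dist (b n) (F (b n) (a n)) * (2 + dist y (F y x) + dist x (F x y)) /
            (2 + dist (b n) y + dist (a n) x) := min_le_left _ _
        rw [hFb n] at step1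
        refine le_trans step1 ?_
        have hCeq : 2 + dist y (F y x) + dist x (F x y) = C := by rw [hC]; ring
        rw [hCeq]
        gcongr
        linarith [dist_nonneg (x := b n) (y := y), dist_nonneg (x := a n) (y := x)]
      have hd : dist y (F y x) ≤ dist y (b (n + 1)) + dist (b (n + 1)) (F y x) := dist_triangle _ _ _
      have hM' := mul_le_mul_of_nonneg_left hM hα.le
      rw [dist_comm (b n) y, dist_comm (a n) x] at h
      linarith
    have tg : Tendsto (fun n => dist y (b (n + 1)) +
        (α * (dist (b n) (b (n + 1)) * C / 2) + β / 2 * (dist y (b n) + dist x (a n))))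
        atTop (𝓝 0) := by
      have := t2'.add ((((t3b.mul_const C).div_const 2).const_mul α).add
        ((t2.add t1).const_mul (β / 2)))
      simpa using this
    have : dist y (F y x) ≤ 0 := ge_of_tendsto tg (Eventually.of_forall key)
    have := le_antisymm this dist_nonneg
    rw [dist_comm] at this
    exact dist_eq_zero.1 this
  exact ⟨x, y, hfx, hfy⟩
end

section
/- Under the hypotheses of the coupled fixed point existence theorem (complete partially ordered metric space, F continuous with mixed monotone property, the rational contraction condition with α+β<1, and x₀ ≤ F(x₀,y₀), y₀ ≥ F(y₀,x₀)), assume additionally that for every pair of points (x,y), (x*,y*) ∈ X×X there exists (z₁,z₂) ∈ X×X comparable (in the product order: (u,v) ≤ (x,y) iff u ≤ x and v ≥ y) to both (x,y) and (x*,y*). Then the coupled fixed point of F is unique. -/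
open Filter Topology

/-- Product order used in the paper: `(u,v) ≤ (x,y)` iff `u ≤ x` and `y ≤ v`. -/
def ProdLe {X : Type*} [PartialOrder X] (p q : X × X) : Prop :=
  p.1 ≤ q.1 ∧ q.2 ≤ p.2

theorem coupled_fixed_point_unique
    {X : Type*} [MetricSpace X] [PartialOrder X] [CompleteSpace X]
    (F : X → X → X) (hFc : Continuous fun p : X × X => F p.1 p.2)
    (hmm : MixedMonotone F) (α β : ℝ) (hα : 0 < α) (hβ : 0 < β) (hαβ : α + β < 1)
    (hcontr : ∀ x y u v : X, u ≤ x → y ≤ v →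
      dist (F x y) (F u v) ≤ α * Mexpr F x y u v + β / 2 * (dist x u + dist y v))
    (x₀ y₀ : X) (hx₀ : x₀ ≤ F x₀ y₀) (hy₀ : F y₀ x₀ ≤ y₀)
    (hcomp : ∀ p q : X × X, ∃ z : X × X,
      (ProdLe z p ∨ ProdLe p z) ∧ (ProdLe z q ∨ ProdLe q z)) :
    ∃! p : X × X, F p.1 p.2 = p.1 ∧ F p.2 p.1 = p.2 := by
  have h1α : 0 < 1 - α := by linarith
  have hβ1 : β < 1 := by linarith
  set G : X × X → X × X := fun w => (F w.1 w.2, F w.2 w.1) with hGdef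
  have hGc : Continuous G := by
    exact Continuous.prodMk hFc (hFc.comp (continuous_snd.prodMk continuous_fst))
  have hMfst : ∀ x y u v : X, Mexpr F x y u v ≤
      dist x (F x y) * (2 + dist u (F u v) + dist v (F v u)) / (2 + dist x u + dist y v) := by
    intro x y u v; simp only [Mexpr]; exact min_le_left _ _
  have hMsnd : ∀ x y u v : X, Mexpr F x y u v ≤
      dist u (F u v) * (2 + dist x (F x y) + dist y (F y x)) / (2 + dist x u + dist y v) := by
    intro x y u v; simp only [Mexpr]; exact min_le_right _ _
  -- key lemma: if one of the two points is a coupled fixed point on the relevant slot,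
  -- the Mexpr term vanishes
  have key : ∀ x y u v : X, u ≤ x → y ≤ v → (F x y = x ∨ F u v = u) →
      dist (F x y) (F u v) ≤ β / 2 * (dist x u + dist y v) := by
    intro x y u v hux hyv hfix
    have h := hcontr x y u v hux hyv
    have hM : Mexpr F x y u v ≤ 0 := by
      rcases hfix with h1 | h1
      · refine le_trans (hMfst x y u v) ?_
        rw [h1, dist_self, zero_mul, zero_div]
      · refine le_trans (hMsnd x y u v) ?_
        rw [h1, dist_self, zero_mul, zero_div]
    have hαM : α * Mexpr F x y u v ≤ 0 := mul_nonpos_of_nonneg_of_nonpos hα.le hM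
    linarith
  -- key step along monotone iteration
  have hstep' : ∀ a b : X, a ≤ F a b → F b a ≤ b →
      (1 - α) * (dist (F a b) (F (F a b) (F b a)) + dist (F b a) (F (F b a) (F a b)))
        ≤ β * (dist a (F a b) + dist b (F b a)) := by
    intro a b hab hba
    have h1 := hcontr (F a b) (F b a) a b hab hba
    have hM1 : Mexpr F (F a b) (F b a) a b ≤ dist (F a b) (F (F a b) (F b a)) := by
      refine (hMfst _ _ _ _).trans (le_of_eq ?_)
      rw [dist_comm (F a b) a, dist_comm (F b a) b, mul_div_assoc,
        div_self (by positivity : (2 + dist a (F a b) + dist b (F b a)) ≠ 0), mul_one]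
    have h2 := hcontr b a (F b a) (F a b) hba hab
    have hM2 : Mexpr F b a (F b a) (F a b) ≤ dist (F b a) (F (F b a) (F a b)) := by
      refine (hMsnd _ _ _ _).trans (le_of_eq ?_)
      rw [mul_div_assoc,
        div_self (by positivity : (2 + dist b (F b a) + dist a (F a b)) ≠ 0), mul_one]
    have hα1 := mul_le_mul_of_nonneg_left hM1 hα.le
    have hα2 := mul_le_mul_of_nonneg_left hM2 hα.le
    rw [dist_comm (F (F a b) (F b a)) (F a b), dist_comm (F a b) a,
      dist_comm (F b a) b] at h1
    linarith
  set p : ℕ → X × X := fun n => G^[n] (x₀, y₀) with hpdef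
  have hps : ∀ n, p (n + 1) = G (p n) := fun n => Function.iterate_succ_apply' G n _
  have hGmono : ∀ w w' : X × X, ProdLe w w' → ProdLe (G w) (G w') := by
    intro w w' hw
    obtain ⟨h1, h2⟩ := hw
    constructor
    · calc F w.1 w.2 ≤ F w'.1 w.2 := hmm.1 w.2 h1
        _ ≤ F w'.1 w'.2 := hmm.2 w'.1 h2
    · calc F w'.2 w'.1 ≤ F w.2 w'.1 := hmm.1 w'.1 h2
        _ ≤ F w.2 w.1 := hmm.2 w.2 h1
  have hmono : ∀ n, ProdLe (p n) (p (n + 1)) := by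
    intro n
    induction n with
    | zero => exact ⟨hx₀, hy₀⟩
    | succ n ih =>
      rw [hps (n + 1), hps n]
      rw [hps n] at ih
      exact hGmono _ _ ih
  have e1 : ∀ n, (p (n + 1)).1 = F (p n).1 (p n).2 := fun n => by rw [hps n]
  have e2 : ∀ n, (p (n + 1)).2 = F (p n).2 (p n).1 := fun n => by rw [hps n]
  have hDle : ∀ n, dist (p n).1 (p (n + 1)).1 + dist (p n).2 (p (n + 1)).2 ≤
      (dist (p 0).1 (p 1).1 + dist (p 0).2 (p 1).2) * (β / (1 - α)) ^ n := by
    intro n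
    induction n with
    | zero => simp
    | succ n ih =>
      have hkey : (1 - α) * (dist (p (n + 1)).1 (p (n + 2)).1 + dist (p (n + 1)).2 (p (n + 2)).2)
          ≤ β * (dist (p n).1 (p (n + 1)).1 + dist (p n).2 (p (n + 1)).2) := by
        have h := hstep' (p n).1 (p n).2 ((e1 n) ▸ (hmono n).1) ((e2 n) ▸ (hmono n).2)
        rw [e1 (n + 1), e2 (n + 1), e1 n, e2 n]
        exact h
      have h4 : (1 - α) * (dist (p (n + 1)).1 (p (n + 2)).1 + dist (p (n + 1)).2 (p (n + 2)).2)
          ≤ (1 - α) * ((dist (p 0).1 (p 1).1 + dist (p 0).2 (p 1).2) * (β / (1 - α)) ^ (n + 1)) := by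
        calc (1 - α) * (dist (p (n + 1)).1 (p (n + 2)).1 + dist (p (n + 1)).2 (p (n + 2)).2)
            ≤ β * (dist (p n).1 (p (n + 1)).1 + dist (p n).2 (p (n + 1)).2) := hkey
          _ ≤ β * ((dist (p 0).1 (p 1).1 + dist (p 0).2 (p 1).2) * (β / (1 - α)) ^ n) :=
              mul_le_mul_of_nonneg_left ih hβ.le
          _ = (1 - α) * ((dist (p 0).1 (p 1).1 + dist (p 0).2 (p 1).2) * (β / (1 - α)) ^ (n + 1)) := by
              rw [pow_succ]
              field_simp
      exact le_of_mul_le_mul_left h4 h1α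
  have hk1 : β / (1 - α) < 1 := (div_lt_one h1α).2 (by linarith)
  have hcauchy : CauchySeq p := by
    refine cauchySeq_of_le_geometric (β / (1 - α))
      (dist (p 0).1 (p 1).1 + dist (p 0).2 (p 1).2) hk1 (fun n => ?_)
    rw [Prod.dist_eq]
    exact (max_le (le_add_of_nonneg_right dist_nonneg)
      (le_add_of_nonneg_left dist_nonneg)).trans (hDle n)
  obtain ⟨l, hl⟩ := cauchySeq_tendsto_of_complete hcauchy
  have hGl : G l = l := by
    have h1 : Tendsto (fun n => G (p n)) atTop (𝓝 (G l)) := (hGc.tendsto l).comp hl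
    have h2 : Tendsto (fun n => G (p n)) atTop (𝓝 l) := by
      have heq : (fun n => p (n + 1)) = fun n => G (p n) := funext hps
      rw [← heq]
      exact hl.comp (tendsto_add_atTop_nat 1)
    exact tendsto_nhds_unique h1 h2
  have hFl1 : F l.1 l.2 = l.1 := congrArg Prod.fst hGl
  have hFl2 : F l.2 l.1 = l.2 := congrArg Prod.snd hGl
  -- convergence of iterates from any comparable point to a coupled fixed point
  have hconv : ∀ r : X × X, F r.1 r.2 = r.1 → F r.2 r.1 = r.2 →
      ∀ w : X × X, (ProdLe w r ∨ ProdLe r w) →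
      Tendsto (fun n => G^[n] w) atTop (𝓝 r) := by
    intro r hr1 hr2 w hw
    have hstep1 : ∀ v : X × X, (ProdLe v r ∨ ProdLe r v) →
        (ProdLe (G v) r ∨ ProdLe r (G v)) ∧
        dist r.1 (G v).1 + dist r.2 (G v).2 ≤ β * (dist r.1 v.1 + dist r.2 v.2) := by
      intro v hv
      rcases hv with ⟨hv1, hv2⟩ | ⟨hv1, hv2⟩
      · refine ⟨Or.inl ⟨?_, ?_⟩, ?_⟩
        · show F v.1 v.2 ≤ r.1
          calc F v.1 v.2 ≤ F r.1 v.2 := hmm.1 v.2 hv1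
            _ ≤ F r.1 r.2 := hmm.2 r.1 hv2
            _ = r.1 := hr1
        · show r.2 ≤ F v.2 v.1
          calc r.2 = F r.2 r.1 := hr2.symm
            _ ≤ F v.2 r.1 := hmm.1 r.1 hv2
            _ ≤ F v.2 v.1 := hmm.2 v.2 hv1
        · have k1 : dist (F r.1 r.2) (F v.1 v.2) ≤ β / 2 * (dist r.1 v.1 + dist r.2 v.2) :=
            key r.1 r.2 v.1 v.2 hv1 hv2 (Or.inl hr1)
          have k2 : dist (F v.2 v.1) (F r.2 r.1) ≤ β / 2 * (dist v.2 r.2 + dist v.1 r.1) :=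
            key v.2 v.1 r.2 r.1 hv2 hv1 (Or.inr hr2)
          have eA : dist r.1 (G v).1 = dist (F r.1 r.2) (F v.1 v.2) := by rw [hr1]
          have eB : dist r.2 (G v).2 = dist (F v.2 v.1) (F r.2 r.1) := by
            rw [hr2, dist_comm]
          rw [eA, eB]
          rw [dist_comm v.2 r.2, dist_comm v.1 r.1] at k2
          linarith
      · refine ⟨Or.inr ⟨?_, ?_⟩, ?_⟩
        · show r.1 ≤ F v.1 v.2
          calc r.1 = F r.1 r.2 := hr1.symm
            _ ≤ F v.1 r.2 := hmm.1 r.2 hv1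
            _ ≤ F v.1 v.2 := hmm.2 v.1 hv2
        · show F v.2 v.1 ≤ r.2
          calc F v.2 v.1 ≤ F r.2 v.1 := hmm.1 v.1 hv2
            _ ≤ F r.2 r.1 := hmm.2 r.2 hv1
            _ = r.2 := hr2
        · have k1 : dist (F v.1 v.2) (F r.1 r.2) ≤ β / 2 * (dist v.1 r.1 + dist v.2 r.2) :=
            key v.1 v.2 r.1 r.2 hv1 hv2 (Or.inr hr1)
          have k2 : dist (F r.2 r.1) (F v.2 v.1) ≤ β / 2 * (dist r.2 v.2 + dist r.1 v.1) :=
            key r.2 r.1 v.2 v.1 hv2 hv1 (Or.inl hr2)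
          have eA : dist r.1 (G v).1 = dist (F v.1 v.2) (F r.1 r.2) := by
            rw [hr1, dist_comm]
          have eB : dist r.2 (G v).2 = dist (F r.2 r.1) (F v.2 v.1) := by rw [hr2]
          rw [eA, eB]
          rw [dist_comm v.1 r.1, dist_comm v.2 r.2] at k1
          linarith
    have hind : ∀ n, (ProdLe (G^[n] w) r ∨ ProdLe r (G^[n] w)) ∧
        dist r.1 (G^[n] w).1 + dist r.2 (G^[n] w).2 ≤
          β ^ n * (dist r.1 w.1 + dist r.2 w.2) := by
      intro n
      induction n with
      | zero => exact ⟨hw, by simp⟩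
      | succ n ih =>
        rw [Function.iterate_succ_apply']
        obtain ⟨hcmp, hbound⟩ := ih
        obtain ⟨hcmp', hbound'⟩ := hstep1 _ hcmp
        refine ⟨hcmp', ?_⟩
        calc dist r.1 (G (G^[n] w)).1 + dist r.2 (G (G^[n] w)).2
            ≤ β * (dist r.1 (G^[n] w).1 + dist r.2 (G^[n] w).2) := hbound'
          _ ≤ β * (β ^ n * (dist r.1 w.1 + dist r.2 w.2)) :=
              mul_le_mul_of_nonneg_left hbound hβ.le
          _ = β ^ (n + 1) * (dist r.1 w.1 + dist r.2 w.2) := by rw [pow_succ]; ring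
    have hdist : ∀ n, dist (G^[n] w) r ≤ β ^ n * (dist r.1 w.1 + dist r.2 w.2) := by
      intro n
      rw [Prod.dist_eq]
      refine max_le ?_ ?_
      · calc dist (G^[n] w).1 r.1 = dist r.1 (G^[n] w).1 := dist_comm _ _
          _ ≤ dist r.1 (G^[n] w).1 + dist r.2 (G^[n] w).2 :=
              le_add_of_nonneg_right dist_nonneg
          _ ≤ _ := (hind n).2
      · calc dist (G^[n] w).2 r.2 = dist r.2 (G^[n] w).2 := dist_comm _ _
          _ ≤ dist r.1 (G^[n] w).1 + dist r.2 (G^[n] w).2 :=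
              le_add_of_nonneg_left dist_nonneg
          _ ≤ _ := (hind n).2
    rw [tendsto_iff_dist_tendsto_zero]
    have hlim : Tendsto (fun n => β ^ n * (dist r.1 w.1 + dist r.2 w.2)) atTop (𝓝 0) := by
      have := (tendsto_pow_atTop_nhds_zero_of_lt_one hβ.le hβ1).mul_const
        (dist r.1 w.1 + dist r.2 w.2)
      simpa using this
    exact squeeze_zero (fun n => dist_nonneg) hdist hlim
  refine ⟨l, ⟨hFl1, hFl2⟩, ?_⟩
  intro q hq
  obtain ⟨z, hz1, hz2⟩ := hcomp q l
  have t1 := hconv q hq.1 hq.2 z hz1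
  have t2 := hconv l hFl1 hFl2 z hz2
  exact tendsto_nhds_unique t1 t2
end

section
/- Under the hypotheses of the coupled fixed point existence theorem, if additionally the starting points x₀ and y₀ are comparable (x₀ ≤ y₀ or y₀ ≤ x₀), then the coupled fixed point (x,y) obtained as the limit of the iterates satisfies x = y. -/
open Filter Topology

lemma aux_eq_components
    {X : Type*} [MetricSpace X] [PartialOrder X]
    (F : X → X → X)
    (hmm : MixedMonotone F) (α β : ℝ) (hα : 0 < α) (hβ : 0 < β) (hαβ : α + β < 1)
    (hcontr : ∀ x y u v : X, u ≤ x → y ≤ v →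
      dist (F x y) (F u v) ≤ α * Mexpr F x y u v + β / 2 * (dist x u + dist y v))
    (xs ys : ℕ → X)
    (hxs : ∀ n, xs (n + 1) = F (xs n) (ys n)) (hys : ∀ n, ys (n + 1) = F (ys n) (xs n))
    (x y : X) (hxlim : Tendsto xs atTop (𝓝 x)) (hylim : Tendsto ys atTop (𝓝 y))
    (hle : xs 0 ≤ ys 0) : x = y := by
  -- the iterates stay comparable
  have hle_n : ∀ n, xs n ≤ ys n := by
    intro n
    induction n with
    | zero => exact hle
    | succ n ih =>
      rw [hxs n, hys n]
      exact le_trans (hmm.1 (ys n) ih) (hmm.2 (ys n) ih)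
  set M : ℕ → ℝ := fun n => Mexpr F (ys n) (xs n) (xs n) (ys n) with hM
  -- key inequality
  have key : ∀ n, dist (xs (n + 1)) (ys (n + 1)) ≤ α * M n + β * dist (xs n) (ys n) := by
    intro n
    have h := hcontr (ys n) (xs n) (xs n) (ys n) (hle_n n) (hle_n n)
    rw [← hxs n, ← hys n] at h
    rw [dist_comm (ys (n+1)) (xs (n+1)), dist_comm (ys n) (xs n)] at h
    calc dist (xs (n+1)) (ys (n+1)) ≤ α * M n + β / 2 * (dist (xs n) (ys n) + dist (xs n) (ys n)) := h
      _ = α * M n + β * dist (xs n) (ys n) := by ring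
  -- the M n tend to 0
  have hxlim' : Tendsto (fun n => xs (n + 1)) atTop (𝓝 x) :=
    hxlim.comp (tendsto_add_atTop_nat 1)
  have hylim' : Tendsto (fun n => ys (n + 1)) atTop (𝓝 y) :=
    hylim.comp (tendsto_add_atTop_nat 1)
  have ha : Tendsto (fun n => dist (xs n) (xs (n + 1))) atTop (𝓝 0) := by
    have := hxlim.dist hxlim'
    simpa using this
  have hb : Tendsto (fun n => dist (ys n) (ys (n + 1))) atTop (𝓝 0) := by
    have := hylim.dist hylim'
    simpa using this
  have hM0 : Tendsto M atTop (𝓝 0) := by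
    have hg : Tendsto (fun n => dist (ys n) (ys (n + 1)) *
        (2 + dist (xs n) (xs (n + 1)) + dist (ys n) (ys (n + 1))) / 2) atTop (𝓝 0) := by
      have h2 : Tendsto (fun n => (2:ℝ) + dist (xs n) (xs (n + 1)) + dist (ys n) (ys (n + 1)))
          atTop (𝓝 ((2:ℝ) + 0 + 0)) := (tendsto_const_nhds.add ha).add hb
      have := (hb.mul h2).div_const 2
      simpa using this
    apply squeeze_zero (fun n => ?_) (fun n => ?_) hg
    · have h1 : (0:ℝ) ≤ dist (ys n) (F (ys n) (xs n)) *
          (2 + dist (xs n) (F (xs n) (ys n)) + dist (ys n) (F (ys n) (xs n))) /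
          (2 + dist (ys n) (xs n) + dist (xs n) (ys n)) := by positivity
      exact le_min h1 (by positivity)
    · calc M n ≤ dist (ys n) (F (ys n) (xs n)) *
          (2 + dist (xs n) (F (xs n) (ys n)) + dist (ys n) (F (ys n) (xs n))) /
          (2 + dist (ys n) (xs n) + dist (xs n) (ys n)) := min_le_left _ _
        _ ≤ dist (ys n) (F (ys n) (xs n)) *
          (2 + dist (xs n) (F (xs n) (ys n)) + dist (ys n) (F (ys n) (xs n))) / 2 := by
            apply div_le_div_of_nonneg_left (by positivity) (by norm_num)
            have := dist_nonneg (x := ys n) (y := xs n)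
            have := dist_nonneg (x := xs n) (y := ys n)
            linarith
        _ = dist (ys n) (ys (n + 1)) *
            (2 + dist (xs n) (xs (n + 1)) + dist (ys n) (ys (n + 1))) / 2 := by
            rw [hxs n, hys n]
  -- pass to the limit
  have h1 : Tendsto (fun n => dist (xs (n + 1)) (ys (n + 1))) atTop (𝓝 (dist x y)) :=
    hxlim'.dist hylim'
  have h2 : Tendsto (fun n => α * M n + β * dist (xs n) (ys n)) atTop
      (𝓝 (α * 0 + β * dist x y)) :=
    ((tendsto_const_nhds.mul hM0).add (tendsto_const_nhds.mul (hxlim.dist hylim)))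
  have hfin : dist x y ≤ α * 0 + β * dist x y := le_of_tendsto_of_tendsto' h1 h2 key
  have hd : dist x y = 0 := by nlinarith [dist_nonneg (x := x) (y := y)]
  exact eq_of_dist_eq_zero hd

theorem coupled_fixed_point_eq_components
    {X : Type*} [MetricSpace X] [PartialOrder X] [CompleteSpace X]
    (F : X → X → X) (hFc : Continuous fun p : X × X => F p.1 p.2)
    (hmm : MixedMonotone F) (α β : ℝ) (hα : 0 < α) (hβ : 0 < β) (hαβ : α + β < 1)
    (hcontr : ∀ x y u v : X, u ≤ x → y ≤ v →
      dist (F x y) (F u v) ≤ α * Mexpr F x y u v + β / 2 * (dist x u + dist y v))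
    (xs ys : ℕ → X) (hx₀ : xs 0 ≤ F (xs 0) (ys 0)) (hy₀ : F (ys 0) (xs 0) ≤ ys 0)
    (hxs : ∀ n, xs (n + 1) = F (xs n) (ys n)) (hys : ∀ n, ys (n + 1) = F (ys n) (xs n))
    (x y : X) (hxlim : Tendsto xs atTop (𝓝 x)) (hylim : Tendsto ys atTop (𝓝 y))
    (hfx : F x y = x) (hfy : F y x = y)
    (hcomp : xs 0 ≤ ys 0 ∨ ys 0 ≤ xs 0) :
    x = y := by
  rcases hcomp with h | h
  · exact aux_eq_components F hmm α β hα hβ hαβ hcontr xs ys hxs hys x y hxlim hylim h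
  · exact (aux_eq_components F hmm α β hα hβ hαβ hcontr ys xs hys hxs y x hylim hxlim h).symm
end

section
/- Let (X,d,≤) be a partially ordered metric space and F: X×X → X satisfy the rational contraction condition d(F(x,y),F(u,v)) ≤ α·M((x,y),(u,v)) + (β/2)[d(x,u)+d(y,v)] for x ≥ u, y ≤ v, with α,β>0, α+β<1, and have the mixed monotone property. Let x₀ ≤ F(x₀,y₀), y₀ ≥ F(y₀,x₀), and define iterates x_{n+1} = F(xₙ,yₙ), y_{n+1} = F(yₙ,xₙ). Then for all n ≥ 1: d(x_{n+1},xₙ) ≤ (β/(1-α))ⁿ · [d(x₁,x₀)+d(y₁,y₀)]/2 and d(y_{n+1},yₙ) ≤ (β/(1-α))ⁿ · [d(x₁,x₀)+d(y₁,y₀)]/2. -/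
open Filter Topology

theorem iterates_dist_bound
    {X : Type*} [MetricSpace X] [PartialOrder X]
    (F : X → X → X) (hmm : MixedMonotone F)
    (α β : ℝ) (hα : 0 < α) (hβ : 0 < β) (hαβ : α + β < 1)
    (hcontr : ∀ x y u v : X, u ≤ x → y ≤ v →
      dist (F x y) (F u v) ≤ α * Mexpr F x y u v + β / 2 * (dist x u + dist y v))
    (xs ys : ℕ → X) (hx₀ : xs 0 ≤ F (xs 0) (ys 0)) (hy₀ : F (ys 0) (xs 0) ≤ ys 0)
    (hxs : ∀ n, xs (n + 1) = F (xs n) (ys n)) (hys : ∀ n, ys (n + 1) = F (ys n) (xs n)) :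
    ∀ n : ℕ, 1 ≤ n →
      dist (xs (n + 1)) (xs n) ≤
        (β / (1 - α)) ^ n * ((dist (xs 1) (xs 0) + dist (ys 1) (ys 0)) / 2) ∧
      dist (ys (n + 1)) (ys n) ≤
        (β / (1 - α)) ^ n * ((dist (xs 1) (xs 0) + dist (ys 1) (ys 0)) / 2) := by
  have h1α : 0 < 1 - α := by linarith
  set k := β / (1 - α) with hkdef
  have hk0 : 0 ≤ k := by positivity
  -- the sequences are monotone
  have mono : ∀ n, xs n ≤ xs (n + 1) ∧ ys (n + 1) ≤ ys n := by
    intro n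
    induction n with
    | zero => exact ⟨by rw [hxs]; exact hx₀, by rw [hys]; exact hy₀⟩
    | succ m ih =>
      constructor
      · rw [hxs, hxs]
        exact le_trans (hmm.1 (ys m) ih.1) (hmm.2 (xs (m + 1)) ih.2)
      · calc ys (m + 2) = F (ys (m + 1)) (xs (m + 1)) := hys (m + 1)
          _ ≤ F (ys m) (xs m) := le_trans (hmm.1 (xs (m + 1)) ih.2) (hmm.2 (ys m) ih.1)
          _ = ys (m + 1) := (hys m).symm
  have keyx : ∀ m, dist (xs (m + 2)) (xs (m + 1)) ≤
      k * ((dist (xs (m + 1)) (xs m) + dist (ys (m + 1)) (ys m)) / 2) := by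
    intro m
    have hc := hcontr (xs (m + 1)) (ys (m + 1)) (xs m) (ys m) (mono m).1 (mono m).2
    rw [← hxs, ← hxs] at hc
    have hden : (0:ℝ) < 2 + dist (xs (m + 1)) (xs m) + dist (ys (m + 1)) (ys m) := by
      positivity
    have hM : Mexpr F (xs (m + 1)) (ys (m + 1)) (xs m) (ys m) ≤
        dist (xs (m + 2)) (xs (m + 1)) := by
      refine le_trans (min_le_left _ _) ?_
      rw [← hxs, ← hxs, ← hys, dist_comm (xs m) (xs (m + 1)),
        dist_comm (ys m) (ys (m + 1)), mul_div_assoc, div_self (ne_of_gt hden), mul_one,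
        dist_comm]
    have h2 : dist (xs (m + 2)) (xs (m + 1)) ≤ α * dist (xs (m + 2)) (xs (m + 1)) +
        β / 2 * (dist (xs (m + 1)) (xs m) + dist (ys (m + 1)) (ys m)) :=
      hc.trans (by nlinarith [hM])
    rw [hkdef, div_mul_eq_mul_div, le_div_iff₀ h1α]
    nlinarith [h2]
  have keyy : ∀ m, dist (ys (m + 2)) (ys (m + 1)) ≤
      k * ((dist (xs (m + 1)) (xs m) + dist (ys (m + 1)) (ys m)) / 2) := by
    intro m
    have hc := hcontr (ys m) (xs m) (ys (m + 1)) (xs (m + 1)) (mono m).2 (mono m).1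
    rw [← hys, ← hys] at hc
    have hden : (0:ℝ) < 2 + dist (ys m) (ys (m + 1)) + dist (xs m) (xs (m + 1)) := by
      positivity
    have hM : Mexpr F (ys m) (xs m) (ys (m + 1)) (xs (m + 1)) ≤
        dist (ys (m + 2)) (ys (m + 1)) := by
      refine le_trans (min_le_right _ _) ?_
      rw [← hys, ← hys, ← hxs, mul_div_assoc, div_self (ne_of_gt hden), mul_one, dist_comm]
    have h2 : dist (ys (m + 2)) (ys (m + 1)) ≤ α * dist (ys (m + 2)) (ys (m + 1)) +
        β / 2 * (dist (ys m) (ys (m + 1)) + dist (xs m) (xs (m + 1))) := by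
      rw [dist_comm (ys (m + 2)) (ys (m + 1))]
      refine hc.trans ?_
      nlinarith [hM, dist_comm (ys (m + 2)) (ys (m + 1))]
    rw [hkdef, div_mul_eq_mul_div, le_div_iff₀ h1α]
    nlinarith [h2, dist_comm (xs (m + 1)) (xs m), dist_comm (ys (m + 1)) (ys m)]
  have Ssum : ∀ m, dist (xs (m + 1)) (xs m) + dist (ys (m + 1)) (ys m) ≤
      k ^ m * (dist (xs 1) (xs 0) + dist (ys 1) (ys 0)) := by
    intro m
    induction m with
    | zero => simp
    | succ p ih =>
      have h1 := keyx p
      have h2 := keyy p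
      have h3 : k * (dist (xs (p + 1)) (xs p) + dist (ys (p + 1)) (ys p)) ≤
          k * (k ^ p * (dist (xs 1) (xs 0) + dist (ys 1) (ys 0))) :=
        mul_le_mul_of_nonneg_left ih hk0
      calc dist (xs (p + 2)) (xs (p + 1)) + dist (ys (p + 2)) (ys (p + 1)) ≤
          k * (dist (xs (p + 1)) (xs p) + dist (ys (p + 1)) (ys p)) := by linarith
        _ ≤ k ^ (p + 1) * (dist (xs 1) (xs 0) + dist (ys 1) (ys 0)) := by
            rw [pow_succ]; linarith [h3]
  intro n hn
  obtain ⟨m, rfl⟩ := Nat.exists_eq_add_of_le hn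
  have hS := Ssum m
  have hb : k * ((dist (xs (m + 1)) (xs m) + dist (ys (m + 1)) (ys m)) / 2) ≤
      k ^ (1 + m) * ((dist (xs 1) (xs 0) + dist (ys 1) (ys 0)) / 2) := by
    have := mul_le_mul_of_nonneg_left hS hk0
    calc k * ((dist (xs (m + 1)) (xs m) + dist (ys (m + 1)) (ys m)) / 2)
        = k * (dist (xs (m + 1)) (xs m) + dist (ys (m + 1)) (ys m)) / 2 := by ring
      _ ≤ k * (k ^ m * (dist (xs 1) (xs 0) + dist (ys 1) (ys 0))) / 2 := by linarith
      _ = k ^ (1 + m) * ((dist (xs 1) (xs 0) + dist (ys 1) (ys 0)) / 2) := by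
          rw [pow_add, pow_one]; ring
  have e1 : 1 + m + 1 = m + 2 := by omega
  have e2 : 1 + m = m + 1 := by omega
  rw [e2] at hb
  rw [e1, e2]
  exact ⟨(keyx m).trans hb, (keyy m).trans hb⟩
end

section
/- Let (X,d,≤) be a complete partially ordered metric space and F: X×X → X have the mixed monotone property and satisfy the rational contraction condition with α,β>0, α+β<1. If x₀ ≤ F(x₀,y₀) and y₀ ≥ F(y₀,x₀), then the iterate sequences xₙ = Fⁿ(x₀,y₀) and yₙ = Fⁿ(y₀,x₀) (where x_{n+1}=F(xₙ,yₙ), y_{n+1}=F(yₙ,xₙ)) are Cauchy sequences in X. -/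
open Filter Topology

theorem iterates_cauchy
    {X : Type*} [MetricSpace X] [PartialOrder X] [CompleteSpace X]
    (F : X → X → X) (hmm : MixedMonotone F)
    (α β : ℝ) (hα : 0 < α) (hβ : 0 < β) (hαβ : α + β < 1)
    (hcontr : ∀ x y u v : X, u ≤ x → y ≤ v →
      dist (F x y) (F u v) ≤ α * Mexpr F x y u v + β / 2 * (dist x u + dist y v))
    (xs ys : ℕ → X) (hx₀ : xs 0 ≤ F (xs 0) (ys 0)) (hy₀ : F (ys 0) (xs 0) ≤ ys 0)
    (hxs : ∀ n, xs (n + 1) = F (xs n) (ys n)) (hys : ∀ n, ys (n + 1) = F (ys n) (xs n)) :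
    CauchySeq xs ∧ CauchySeq ys := by
  obtain ⟨hmono, hanti⟩ := hmm
  have h1α : (0:ℝ) < 1 - α := by linarith
  -- monotonicity of the iterates
  have hstep : ∀ n, xs n ≤ xs (n + 1) ∧ ys (n + 1) ≤ ys n := by
    intro n
    induction n with
    | zero => exact ⟨by rw [hxs 0]; exact hx₀, by rw [hys 0]; exact hy₀⟩
    | succ n ih =>
      refine ⟨?_, ?_⟩
      · calc xs (n + 1) = F (xs n) (ys n) := hxs n
          _ ≤ F (xs n) (ys (n + 1)) := hanti (xs n) ih.2
          _ ≤ F (xs (n + 1)) (ys (n + 1)) := hmono (ys (n + 1)) ih.1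
          _ = xs (n + 2) := (hxs (n + 1)).symm
      · calc ys (n + 2) = F (ys (n + 1)) (xs (n + 1)) := hys (n + 1)
          _ ≤ F (ys (n + 1)) (xs n) := hanti (ys (n + 1)) ih.1
          _ ≤ F (ys n) (xs n) := hmono (xs n) ih.2
          _ = ys (n + 1) := (hys n).symm
  set δ : ℕ → ℝ := fun n => dist (xs n) (xs (n + 1)) + dist (ys n) (ys (n + 1)) with hδ
  have hδ0 : ∀ n, 0 ≤ δ n := fun n => add_nonneg dist_nonneg dist_nonneg
  set k : ℝ := β / (1 - α) with hk
  have hk0 : 0 ≤ k := div_nonneg hβ.le h1α.le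
  have hk1 : k < 1 := (div_lt_one h1α).mpr (by linarith)
  have key : ∀ n, δ (n + 1) ≤ k * δ n := by
    intro n
    -- x part
    have hMx : Mexpr F (xs (n + 1)) (ys (n + 1)) (xs n) (ys n)
        ≤ dist (xs (n + 1)) (xs (n + 2)) := by
      have := min_le_left
        (dist (xs (n+1)) (F (xs (n+1)) (ys (n+1))) *
          (2 + dist (xs n) (F (xs n) (ys n)) + dist (ys n) (F (ys n) (xs n))) /
          (2 + dist (xs (n+1)) (xs n) + dist (ys (n+1)) (ys n)))
        (dist (xs n) (F (xs n) (ys n)) *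
          (2 + dist (xs (n+1)) (F (xs (n+1)) (ys (n+1))) +
            dist (ys (n+1)) (F (ys (n+1)) (xs (n+1)))) /
          (2 + dist (xs (n+1)) (xs n) + dist (ys (n+1)) (ys n)))
      rw [Mexpr]
      refine le_trans (min_le_left _ _) ?_
      rw [← hxs (n + 1), ← hxs n, ← hys n,
        dist_comm (xs (n + 1)) (xs n), dist_comm (ys (n + 1)) (ys n),
        mul_div_assoc, div_self (by positivity), mul_one]
    have hx' : dist (xs (n + 1)) (xs (n + 2))
        ≤ α * dist (xs (n + 1)) (xs (n + 2)) + β / 2 * δ n := by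
      have h1 := hcontr (xs (n + 1)) (ys (n + 1)) (xs n) (ys n) (hstep n).1 (hstep n).2
      rw [← hxs (n + 1), ← hxs n] at h1
      have h2 : α * Mexpr F (xs (n + 1)) (ys (n + 1)) (xs n) (ys n)
          ≤ α * dist (xs (n + 1)) (xs (n + 2)) :=
        mul_le_mul_of_nonneg_left hMx hα.le
      have h3 : dist (xs (n + 2)) (xs (n + 1)) = dist (xs (n + 1)) (xs (n + 2)) :=
        dist_comm _ _
      have h4 : dist (xs (n + 1)) (xs n) = dist (xs n) (xs (n + 1)) := dist_comm _ _
      have h5 : dist (ys (n + 1)) (ys n) = dist (ys n) (ys (n + 1)) := dist_comm _ _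
      simp only [hδ]
      rw [h3, h4, h5] at h1
      linarith
    -- y part
    have hMy : Mexpr F (ys n) (xs n) (ys (n + 1)) (xs (n + 1))
        ≤ dist (ys (n + 1)) (ys (n + 2)) := by
      rw [Mexpr]
      refine le_trans (min_le_right _ _) ?_
      rw [← hys (n + 1), ← hys n, ← hxs n,
        mul_div_assoc, div_self (by positivity), mul_one]
    have hy' : dist (ys (n + 1)) (ys (n + 2))
        ≤ α * dist (ys (n + 1)) (ys (n + 2)) + β / 2 * δ n := by
      have h1 := hcontr (ys n) (xs n) (ys (n + 1)) (xs (n + 1)) (hstep n).2 (hstep n).1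
      rw [← hys (n + 1), ← hys n] at h1
      rw [show n + 1 + 1 = n + 2 by omega] at h1
      have h2 : α * Mexpr F (ys n) (xs n) (ys (n + 1)) (xs (n + 1))
          ≤ α * dist (ys (n + 1)) (ys (n + 2)) :=
        mul_le_mul_of_nonneg_left hMy hα.le
      simp only [hδ]
      linarith
    have hsum : (1 - α) * δ (n + 1) ≤ β * δ n := by
      simp only [hδ] at hx' hy' ⊢
      nlinarith [hx', hy']
    rw [hk, div_mul_eq_mul_div, le_div_iff₀ h1α]
    nlinarith [hsum]
  have hgeo : ∀ n, δ n ≤ δ 0 * k ^ n := by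
    intro n
    induction n with
    | zero => simp
    | succ n ih =>
      calc δ (n + 1) ≤ k * δ n := key n
        _ ≤ k * (δ 0 * k ^ n) := mul_le_mul_of_nonneg_left ih hk0
        _ = δ 0 * k ^ (n + 1) := by ring
  constructor
  · apply cauchySeq_of_le_geometric k (δ 0) hk1
    intro n
    calc dist (xs n) (xs (n + 1)) ≤ δ n := le_add_of_nonneg_right dist_nonneg
      _ ≤ δ 0 * k ^ n := hgeo n
  · apply cauchySeq_of_le_geometric k (δ 0) hk1
    intro n
    calc dist (ys n) (ys (n + 1)) ≤ δ n := le_add_of_nonneg_left dist_nonneg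
      _ ≤ δ 0 * k ^ n := hgeo n
end

section
/- Let (X,d,≤) be a partially ordered metric space and F: X×X → X satisfy d(F(x,y),F(u,v)) ≤ α·M((x,y),(u,v)) + (β/2)[d(x,u)+d(y,v)] for all x ≥ u, y ≤ v, with α,β>0, α+β<1. Suppose (x,y) and (x*,y*) are coupled fixed points of F that are comparable in the product order ((u,v) ≤ (x,y) iff u ≤ x, v ≥ y). Then d(x,x*) + d(y,y*) ≤ β·[d(x,x*) + d(y,y*)], and hence (x,y) = (x*,y*). -/
open Filter Topology

lemma Mexpr_of_fixed {X : Type*} [MetricSpace X] (F : X → X → X) (a b c d : X)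
    (h1 : F a b = a) (h3 : F c d = c) : Mexpr F a b c d = 0 := by
  simp [Mexpr, h1, h3]

theorem comparable_coupled_fixed_points_eq
    {X : Type*} [MetricSpace X] [PartialOrder X]
    (F : X → X → X) (α β : ℝ) (hα : 0 < α) (hβ : 0 < β) (hαβ : α + β < 1)
    (hcontr : ∀ x y u v : X, u ≤ x → y ≤ v →
      dist (F x y) (F u v) ≤ α * Mexpr F x y u v + β / 2 * (dist x u + dist y v))
    (x y x' y' : X) (hxy : F x y = x ∧ F y x = y) (hxy' : F x' y' = x' ∧ F y' x' = y')
    (hcomp : (x' ≤ x ∧ y ≤ y') ∨ (x ≤ x' ∧ y' ≤ y)) :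
    dist x x' + dist y y' ≤ β * (dist x x' + dist y y') ∧ x = x' ∧ y = y' := by
  obtain ⟨h1, h2⟩ := hxy
  obtain ⟨h3, h4⟩ := hxy'
  have key : dist x x' + dist y y' ≤ β * (dist x x' + dist y y') := by
    rcases hcomp with ⟨hx, hy⟩ | ⟨hx, hy⟩
    · have A := hcontr x y x' y' hx hy
      have B := hcontr y' x' y x hy hx
      rw [h1, h3, Mexpr_of_fixed F x y x' y' h1 h3] at A
      rw [h2, h4, Mexpr_of_fixed F y' x' y x h4 h2] at B
      rw [dist_comm y' y, dist_comm x' x] at B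
      linarith
    · have A := hcontr x' y' x y hx hy
      have B := hcontr y x y' x' hy hx
      rw [h1, h3, Mexpr_of_fixed F x' y' x y h3 h1] at A
      rw [h2, h4, Mexpr_of_fixed F y x y' x' h2 h4] at B
      rw [dist_comm x' x, dist_comm y' y] at A
      linarith
  refine ⟨key, ?_, ?_⟩ <;>
  · rw [← dist_eq_zero]
    have d1 : 0 ≤ dist x x' := dist_nonneg
    have d2 : 0 ≤ dist y y' := dist_nonneg
    nlinarith
end

section
/- Let (X,d,≤) be a complete partially ordered metric space and F: X×X → X be continuous with mixed monotone property satisfying the rational contraction with α,β>0, α+β<1, and suppose x₀ ≤ F(x₀,y₀), y₀ ≥ F(y₀,x₀). Let (x,y) be the coupled fixed point obtained as the limit of the iterates. If y₀ ≤ x₀ (instead of x₀ ≤ y₀), then also x = y. -/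
open Filter Topology

theorem coupled_fixed_point_eq_components'
    {X : Type*} [MetricSpace X] [PartialOrder X] [CompleteSpace X]
    (F : X → X → X) (hFc : Continuous fun p : X × X => F p.1 p.2)
    (hmm : MixedMonotone F) (α β : ℝ) (hα : 0 < α) (hβ : 0 < β) (hαβ : α + β < 1)
    (hcontr : ∀ x y u v : X, u ≤ x → y ≤ v →
      dist (F x y) (F u v) ≤ α * Mexpr F x y u v + β / 2 * (dist x u + dist y v))
    (xs ys : ℕ → X) (hx₀ : xs 0 ≤ F (xs 0) (ys 0)) (hy₀ : F (ys 0) (xs 0) ≤ ys 0)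
    (hxs : ∀ n, xs (n + 1) = F (xs n) (ys n)) (hys : ∀ n, ys (n + 1) = F (ys n) (xs n))
    (x y : X) (hxlim : Tendsto xs atTop (𝓝 x)) (hylim : Tendsto ys atTop (𝓝 y))
    (hfx : F x y = x) (hfy : F y x = y)
    (h10 : ys 0 ≤ xs 0) :
    x = y := by
  -- Step 1: ys n ≤ xs n for all n
  have hle : ∀ n, ys n ≤ xs n := by
    intro n
    induction n with
    | zero => exact h10
    | succ n ih =>
      rw [hxs, hys]
      calc F (ys n) (xs n) ≤ F (ys n) (ys n) := hmm.2 (ys n) ih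
        _ ≤ F (xs n) (ys n) := hmm.1 (ys n) ih
  -- Step 2: the contraction inequality along the iterates
  have hineq : ∀ n, dist (xs (n+1)) (ys (n+1)) ≤
      α * Mexpr F (xs n) (ys n) (ys n) (xs n)
        + β / 2 * (dist (xs n) (ys n) + dist (ys n) (xs n)) := by
    intro n
    rw [hxs, hys]
    exact hcontr (xs n) (ys n) (ys n) (xs n) (hle n) (hle n)
  -- limits
  have hpair : Tendsto (fun n => (xs n, ys n)) atTop (𝓝 (x, y)) :=
    hxlim.prodMk_nhds hylim
  have hpair' : Tendsto (fun n => (ys n, xs n)) atTop (𝓝 (y, x)) :=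
    hylim.prodMk_nhds hxlim
  have hFxy : Tendsto (fun n => F (xs n) (ys n)) atTop (𝓝 x) := by
    have := (hFc.tendsto (x, y)).comp hpair
    simpa [hfx, Function.comp_def] using this
  have hFyx : Tendsto (fun n => F (ys n) (xs n)) atTop (𝓝 y) := by
    have := (hFc.tendsto (y, x)).comp hpair'
    simpa [hfy, Function.comp_def] using this
  have hA : Tendsto (fun n => dist (xs n) (F (xs n) (ys n))) atTop (𝓝 0) := by
    have := hxlim.dist hFxy
    simpa using this
  have hB : Tendsto (fun n => dist (ys n) (F (ys n) (xs n))) atTop (𝓝 0) := by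
    have := hylim.dist hFyx
    simpa using this
  have hD : Tendsto (fun n => dist (xs n) (ys n)) atTop (𝓝 (dist x y)) :=
    hxlim.dist hylim
  have hD' : Tendsto (fun n => dist (ys n) (xs n)) atTop (𝓝 (dist y x)) :=
    hylim.dist hxlim
  have hden : (2 : ℝ) + dist x y + dist y x ≠ 0 := by positivity
  have hM : Tendsto (fun n => Mexpr F (xs n) (ys n) (ys n) (xs n)) atTop (𝓝 0) := by
    have h1 : Tendsto (fun n =>
        dist (xs n) (F (xs n) (ys n))
          * (2 + dist (ys n) (F (ys n) (xs n)) + dist (xs n) (F (xs n) (ys n)))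
          / (2 + dist (xs n) (ys n) + dist (ys n) (xs n))) atTop
        (𝓝 (0 * (2 + 0 + 0) / (2 + dist x y + dist y x))) :=
      ((hA.mul (((tendsto_const_nhds.add hB).add hA))).div
        ((tendsto_const_nhds.add hD).add hD') hden)
    have h2 : Tendsto (fun n =>
        dist (ys n) (F (ys n) (xs n))
          * (2 + dist (xs n) (F (xs n) (ys n)) + dist (ys n) (F (ys n) (xs n)))
          / (2 + dist (xs n) (ys n) + dist (ys n) (xs n))) atTop
        (𝓝 (0 * (2 + 0 + 0) / (2 + dist x y + dist y x))) :=
      ((hB.mul (((tendsto_const_nhds.add hA).add hB))).div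
        ((tendsto_const_nhds.add hD).add hD') hden)
    have := h1.min h2
    simp only [Mexpr]
    simpa using this
  -- limit of LHS
  have hL : Tendsto (fun n => dist (xs (n+1)) (ys (n+1))) atTop (𝓝 (dist x y)) :=
    hD.comp (tendsto_add_atTop_nat 1)
  have hR : Tendsto (fun n => α * Mexpr F (xs n) (ys n) (ys n) (xs n)
        + β / 2 * (dist (xs n) (ys n) + dist (ys n) (xs n))) atTop
      (𝓝 (α * 0 + β / 2 * (dist x y + dist y x))) :=
    ((tendsto_const_nhds.mul hM).add (tendsto_const_nhds.mul (hD.add hD')))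
  have key : dist x y ≤ α * 0 + β / 2 * (dist x y + dist y x) :=
    le_of_tendsto_of_tendsto' hL hR hineq
  rw [dist_comm y x] at key
  have hd0 : dist x y = 0 := by nlinarith [dist_nonneg (x := x) (y := y)]
  exact dist_eq_zero.mp hd0
end
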